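/- The F-vector space V₁ of finite type invariants of degree ≤ 1 has dimension 2; a basis is given by the constant function 1 and the function assigning to each signed word its number of letters. -/

import Mathlib

/-- Letters are indexed by natural numbers; a signed letter carries a sign
(`true` = `+`, `false` = `−`). -/
abbrev Letter : Type := ℕ × Bool

/-- A signed word: every entry occurs exactly twice, and the two occurrences of
any letter carry the same sign. -/
def IsSignedWord (w : List Letter) : Prop :=
  ∀ p ∈ w, w.count p = 2 ∧ ∀ q ∈ w, q.1 = p.1 → q.2 = p.2

/-- Signed words (concrete representatives; isomorphism is subsumed by cyclic
equivalence below). -/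
def SignedWord : Type := {w : List Letter // IsSignedWord w}

/-- The set of letters occurring in a list of signed letters. -/
def lettersL (w : List Letter) : Finset ℕ := (w.map Prod.fst).toFinset

/-- The set of letters of a signed word. -/
def SignedWord.letters (w : SignedWord) : Finset ℕ := lettersL w.1

/-- The number of (distinct) letters of a signed word. -/
def SignedWord.numLetters (w : SignedWord) : ℕ := w.letters.card

theorem isSignedWord_filter (q : ℕ → Bool) {w : List Letter} (hw : IsSignedWord w) :
    IsSignedWord (w.filter fun p => q p.1) := by
  intro p hp
  rw [List.mem_filter] at hp
  refine ⟨?_, fun r hr => (hw p hp.1).2 r (List.mem_filter.mp hr).1⟩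
  rw [List.count_filter (p := fun r : Letter => q r.1) hp.2]
  exact (hw p hp.1).1

/-- Delete both occurrences of every letter of `T` from `w`. -/
def SignedWord.delete (w : SignedWord) (T : Finset ℕ) : SignedWord :=
  ⟨w.1.filter fun p => decide (p.1 ∉ T), isSignedWord_filter (fun a => decide (a ∉ T)) w.2⟩

/-- The induced signed subword of `w` on a set `U` of letters. -/
def SignedWord.restrict (w : SignedWord) (U : Finset ℕ) : SignedWord :=
  ⟨w.1.filter fun p => decide (p.1 ∈ U), isSignedWord_filter (fun a => decide (a ∈ U)) w.2⟩

/-- Sign-preserving relabeling of letters. -/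
def Iso (w w' : List Letter) : Prop :=
  ∃ f : ℕ ≃ ℕ, w' = w.map fun p => (f p.1, p.2)

/-- The basic move `A^ε x A^ε y ↦ x A^(−ε) y A^(−ε)`. -/
def Move (w w' : List Letter) : Prop :=
  ∃ (a : ℕ) (s : Bool) (x y : List Letter),
    w = (a, s) :: (x ++ (a, s) :: y) ∧ w' = x ++ (a, !s) :: (y ++ [(a, !s)])

/-- Cyclic equivalence of signed words: the equivalence relation generated by
isomorphism together with the basic move. -/
def CyclicEquivL : List Letter → List Letter → Prop :=
  Relation.EqvGen fun w w' => Iso w w' ∨ Move w w'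

/-- Cyclic equivalence of signed words. -/
def SignedWord.CyclicEquiv (w w' : SignedWord) : Prop := CyclicEquivL w.1 w'.1

/-- A cyclic equivalence invariant with values in `F`. -/
def WordInvariant (F : Type*) [Field F] (v : SignedWord → F) : Prop :=
  ∀ w w' : SignedWord, w.CyclicEquiv w' → v w = v w'

/-- The prolongation of `v` to the singular signed word `(w, S)` (the letters of
`S` being declared singular), given by inclusion–exclusion. -/
def prolong (F : Type*) [Field F] (v : SignedWord → F) (w : SignedWord) (S : Finset ℕ) : F :=
  ∑ T ∈ S.powerset, (-1 : F) ^ T.card * v (w.delete T)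

/-- `v` is a finite type invariant of degree ≤ `n`: it is a cyclic equivalence
invariant whose prolongation vanishes on every singular signed word with more
than `n` singular letters. -/
def FiniteTypeLe (F : Type*) [Field F] (n : ℕ) (v : SignedWord → F) : Prop :=
  WordInvariant F v ∧
    ∀ (w : SignedWord) (S : Finset ℕ), S ⊆ w.letters → n < S.card →
      prolong F v w S = 0

/-- The empty signed word `φ`. -/
def wordEmpty : SignedWord := ⟨[], by intro p hp; simp at hp⟩

/-- The one-letter positive signed word `AA`. -/
def wordAA : SignedWord := ⟨[(0, true), (0, true)], by unfold IsSignedWord; decide⟩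

/-- The one-letter negative signed word `ĀĀ`. -/
def wordAAneg : SignedWord := ⟨[(0, false), (0, false)], by unfold IsSignedWord; decide⟩

/-- The two-letter signed word `AABB`. -/
def wordAABB : SignedWord := ⟨[(0, true), (0, true), (1, true), (1, true)], by unfold IsSignedWord; decide⟩

/-- The two-letter signed word `AAB̄B̄`. -/
def wordAABnBn : SignedWord := ⟨[(0, true), (0, true), (1, false), (1, false)], by unfold IsSignedWord; decide⟩

/-- The two-letter signed word `AB̄B̄A`. -/
def wordABnBnA : SignedWord := ⟨[(0, true), (1, false), (1, false), (0, true)], by unfold IsSignedWord; decide⟩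

/-- The two-letter signed word `ABAB`. -/
def wordABAB : SignedWord := ⟨[(0, true), (1, true), (0, true), (1, true)], by unfold IsSignedWord; decide⟩

/-- The underlying list of the word `A₁A₁A₂A₂…AₙAₙ` (all letters positive). -/
def wListN (n : ℕ) : List Letter := (List.range n).flatMap fun i => [(i, true), (i, true)]

/-- `Ncount u w`: the number of `k`-element subsets of the letters of `w`
(`k` = number of letters of `u`) whose induced signed subword is cyclically
equivalent to (an isomorphic copy of) `u`. -/
noncomputable def Ncount (u w : SignedWord) : ℕ := by
  classical
  exact (w.letters.powerset.filter fun U =>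
    U.card = u.numLetters ∧ (w.restrict U).CyclicEquiv u).card

theorem prolong_add (F : Type*) [Field F] (v₁ v₂ : SignedWord → F) (w : SignedWord) (S : Finset ℕ) :
    prolong F (v₁ + v₂) w S = prolong F v₁ w S + prolong F v₂ w S := by
  simp [prolong, ← Finset.sum_add_distrib, mul_add]

theorem prolong_smul (F : Type*) [Field F] (c : F) (v : SignedWord → F) (w : SignedWord) (S : Finset ℕ) :
    prolong F (c • v) w S = c * prolong F v w S := by
  rw [prolong, prolong, Finset.mul_sum]
  exact Finset.sum_congr rfl fun T _ => by simp [mul_left_comm]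

/-- The `F`-vector space `Vₙ` of finite type invariants of degree ≤ `n`. -/
def Vn (F : Type*) [Field F] (n : ℕ) : Submodule F (SignedWord → F) where
  carrier := {v | FiniteTypeLe F n v}
  add_mem' := by
    rintro v₁ v₂ ⟨h1, h1'⟩ ⟨h2, h2'⟩
    refine ⟨fun w w' h => by simp [h1 w w' h, h2 w w' h], fun w S hS hc => ?_⟩
    rw [prolong_add, h1' w S hS hc, h2' w S hS hc, add_zero]
  zero_mem' := ⟨fun _ _ _ => rfl, fun w S hS hc => by simp [prolong]⟩
  smul_mem' := by
    rintro c v ⟨h, h'⟩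
    refine ⟨fun w w' hww => by simp [h w w' hww], fun w S hS hc => ?_⟩
    rw [prolong_smul, h' w S hS hc, mul_zero]

/-- Cyclic equivalence as a setoid on signed words. -/
def cycSetoid : Setoid SignedWord :=
  ⟨SignedWord.CyclicEquiv, fun w => Relation.EqvGen.refl w.1,
    fun h => Relation.EqvGen.symm _ _ h, fun h h' => Relation.EqvGen.trans _ _ _ h h'⟩


section MyAux
variable {F : Type*} [Field F]

lemma mem_lettersL {w : List Letter} {a : ℕ} : a ∈ lettersL w ↔ ∃ p ∈ w, p.1 = a := by
  simp [lettersL]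

lemma letters_delete (w : SignedWord) (T : Finset ℕ) :
    (w.delete T).letters = w.letters \ T := by
  ext a
  simp only [SignedWord.letters, SignedWord.delete, Finset.mem_sdiff, mem_lettersL,
    List.mem_filter, decide_eq_true_eq]
  constructor
  · rintro ⟨p, ⟨hp, hpT⟩, rfl⟩
    exact ⟨⟨p, hp, rfl⟩, hpT⟩
  · rintro ⟨⟨p, hp, rfl⟩, hT⟩
    exact ⟨p, ⟨hp, hT⟩, rfl⟩

lemma numLetters_delete (w : SignedWord) (T : Finset ℕ) (hT : T ⊆ w.letters) :
    (w.delete T).numLetters = w.numLetters - T.card := by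
  rw [SignedWord.numLetters, letters_delete, Finset.card_sdiff_of_subset hT]; rfl

lemma delete_empty (w : SignedWord) : w.delete ∅ = w := by
  apply Subtype.ext
  simp [SignedWord.delete]

lemma delete_delete (w : SignedWord) (T T' : Finset ℕ) :
    (w.delete T).delete T' = w.delete (T ∪ T') := by
  apply Subtype.ext
  show (w.1.filter _).filter _ = _
  rw [List.filter_filter]
  apply List.filter_congr
  intro p _
  simp [Finset.mem_union, not_or, Bool.decide_and, Bool.and_comm]

end MyAux
section MyAux2
variable {F : Type*} [Field F]

lemma prolong_empty (v : SignedWord → F) (w : SignedWord) :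
    prolong F v w ∅ = v w := by
  simp [prolong, delete_empty]

lemma prolong_insert (v : SignedWord → F) (w : SignedWord) {a : ℕ} {S : Finset ℕ}
    (ha : a ∉ S) :
    prolong F v w (insert a S) = prolong F v w S - prolong F v (w.delete {a}) S := by
  unfold prolong
  rw [Finset.sum_powerset_insert ha]
  have : ∀ T ∈ S.powerset, (-1 : F) ^ (insert a T).card * v (w.delete (insert a T)) =
      -((-1 : F) ^ T.card * v ((w.delete {a}).delete T)) := by
    intro T hT
    rw [Finset.mem_powerset] at hT
    have haT : a ∉ T := fun h => ha (hT h)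
    rw [Finset.card_insert_of_notMem haT, delete_delete]
    have : insert a T = {a} ∪ T := by
      ext x; simp [Finset.mem_insert, Finset.mem_union]
    rw [this, pow_succ]
    ring
  rw [Finset.sum_congr rfl this, Finset.sum_neg_distrib]
  ring

end MyAux2
section MyAux3
variable {F : Type*} [Field F]

lemma prolong_singleton (v : SignedWord → F) (w : SignedWord) (a : ℕ) :
    prolong F v w {a} = v w - v (w.delete {a}) := by
  have : ({a} : Finset ℕ) = insert a ∅ := rfl
  rw [this, prolong_insert v w (Finset.notMem_empty a), prolong_empty, prolong_empty, ← this]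

lemma prolong_pair (v : SignedWord → F) (w : SignedWord) {a b : ℕ} (hab : a ≠ b) :
    prolong F v w {a, b} =
      v w - v (w.delete {a}) - v (w.delete {b}) + v (w.delete {a, b}) := by
  have hmem : a ∉ ({b} : Finset ℕ) := by simpa using hab
  rw [show ({a, b} : Finset ℕ) = insert a {b} from rfl,
    prolong_insert v w hmem, prolong_singleton, prolong_singleton, delete_delete]
  have : ({a} : Finset ℕ) ∪ {b} = {a, b} := by
    ext x; simp
  rw [this]
  ring

lemma vanish_of_two (v : SignedWord → F)
    (h2 : ∀ (w : SignedWord) (S : Finset ℕ), S ⊆ w.letters → S.card = 2 →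
      prolong F v w S = 0) :
    ∀ (w : SignedWord) (S : Finset ℕ), S ⊆ w.letters → 1 < S.card →
      prolong F v w S = 0 := by
  have key : ∀ (n : ℕ) (w : SignedWord) (S : Finset ℕ), S.card = n →
      S ⊆ w.letters → 1 < S.card → prolong F v w S = 0 := by
    intro n
    induction n using Nat.strong_induction_on with
    | _ n ih =>
      intro w S hcard hS hlt
      rcases eq_or_lt_of_le (by omega : 2 ≤ S.card) with h2c | h3
      · exact h2 w S hS h2c.symm
      · -- S.card ≥ 3
        obtain ⟨a, ha⟩ : S.Nonempty := Finset.card_pos.mp (by omega)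
        have hins : S = insert a (S.erase a) := (Finset.insert_erase ha).symm
        have hane : a ∉ S.erase a := Finset.notMem_erase a S
        have hce : (S.erase a).card = S.card - 1 := Finset.card_erase_of_mem ha
        rw [hins, prolong_insert v w hane]
        have h1 : prolong F v w (S.erase a) = 0 :=
          ih (S.card - 1) (by omega) w (S.erase a) hce
            ((Finset.erase_subset a S).trans hS) (by omega)
        have hsub : S.erase a ⊆ (w.delete {a}).letters := by
          rw [letters_delete]
          intro x hx
          rw [Finset.mem_sdiff]
          exact ⟨hS (Finset.mem_of_mem_erase hx), by
            simpa using Finset.ne_of_mem_erase hx⟩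
        have h2' : prolong F v (w.delete {a}) (S.erase a) = 0 :=
          ih (S.card - 1) (by omega) (w.delete {a}) (S.erase a) hce hsub (by omega)
        rw [h1, h2', sub_zero]
  intro w S hS hlt
  exact key S.card w S rfl hS hlt

end MyAux3
section MyAux4
variable {F : Type*} [Field F]

lemma lettersL_card_iso {w w' : List Letter} (h : Iso w w') :
    (lettersL w').card = (lettersL w).card := by
  obtain ⟨f, rfl⟩ := h
  have : lettersL (w.map fun p => (f p.1, p.2)) = (lettersL w).image f := by
    ext b
    simp only [mem_lettersL, Finset.mem_image, List.mem_map]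
    constructor
    · rintro ⟨q, ⟨p, hp, rfl⟩, rfl⟩
      exact ⟨p.1, ⟨p, hp, rfl⟩, rfl⟩
    · rintro ⟨c, ⟨p, hp, rfl⟩, rfl⟩
      exact ⟨(f p.1, p.2), ⟨p, hp, rfl⟩, rfl⟩
  rw [this, Finset.card_image_of_injective _ f.injective]

lemma lettersL_move {w w' : List Letter} (h : Move w w') :
    lettersL w' = lettersL w := by
  obtain ⟨a, s, x, y, rfl, rfl⟩ := h
  ext b
  simp only [mem_lettersL, List.mem_append, List.mem_cons, List.mem_singleton]
  constructor
  · rintro ⟨p, hp, rfl⟩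
    rcases hp with hp | rfl | hp | rfl | hp
    · exact ⟨p, Or.inr (Or.inl hp), rfl⟩
    · exact ⟨(a, s), Or.inl rfl, rfl⟩
    · exact ⟨p, Or.inr (Or.inr (Or.inr hp)), rfl⟩
    · exact ⟨(a, s), Or.inl rfl, rfl⟩
    · exact absurd hp List.not_mem_nil
  · rintro ⟨p, hp, rfl⟩
    rcases hp with rfl | hp | rfl | hp
    · exact ⟨(a, !s), Or.inr (Or.inl rfl), rfl⟩
    · exact ⟨p, Or.inl hp, rfl⟩
    · exact ⟨(a, !s), Or.inr (Or.inl rfl), rfl⟩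
    · exact ⟨p, Or.inr (Or.inr (Or.inl hp)), rfl⟩

lemma lettersL_card_cyclic {u u' : List Letter} (h : CyclicEquivL u u') :
    (lettersL u).card = (lettersL u').card := by
  induction h with
  | rel a b hr =>
    rcases hr with hiso | hmove
    · exact (lettersL_card_iso hiso).symm
    · rw [lettersL_move hmove]
  | refl => rfl
  | symm _ _ _ ih => exact ih.symm
  | trans _ _ _ _ _ ih1 ih2 => exact ih1.trans ih2

lemma numLetters_cyclic {w w' : SignedWord} (h : w.CyclicEquiv w') :
    w.numLetters = w'.numLetters :=
  lettersL_card_cyclic h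

lemma wordInvariant_numLetters :
    WordInvariant F (fun w => (w.numLetters : F)) :=
  fun _ _ h => by simp [numLetters_cyclic h]

end MyAux4
section MyAux5
variable {F : Type*} [Field F]

lemma eq_empty_of_numLetters_zero (w : SignedWord) (h : w.numLetters = 0) :
    w = wordEmpty := by
  apply Subtype.ext
  have hl : w.letters = ∅ := Finset.card_eq_zero.mp h
  rcases List.eq_nil_or_concat w.1 with h0 | ⟨l, p, hlp⟩
  · exact h0
  · exfalso
    have : p.1 ∈ w.letters := mem_lettersL.mpr ⟨p, by rw [hlp]; simp, rfl⟩
    rw [hl] at this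
    exact Finset.notMem_empty _ this

lemma eq_pair_of_numLetters_one (w : SignedWord) (h : w.numLetters = 1) :
    ∃ a s, w.1 = [(a, s), (a, s)] := by
  obtain ⟨a, ha⟩ := Finset.card_eq_one.mp h
  have hmema : a ∈ w.letters := ha ▸ Finset.mem_singleton_self a
  obtain ⟨p, hp, hpa⟩ := mem_lettersL.mp hmema
  have hall : ∀ q ∈ w.1, q = p := by
    intro q hq
    have hq1 : q.1 ∈ w.letters := mem_lettersL.mpr ⟨q, hq, rfl⟩
    rw [ha, Finset.mem_singleton] at hq1
    have h1 : q.1 = p.1 := by rw [hq1, hpa]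
    have h2 : q.2 = p.2 := (w.2 p hp).2 q hq h1
    exact Prod.ext h1 h2
  have hcount : w.1.count p = 2 := (w.2 p hp).1
  have hlen : w.1.count p = w.1.length := List.count_eq_length.mpr fun b hb => (hall b hb).symm
  have hrep : w.1 = List.replicate w.1.length p :=
    List.eq_replicate_of_mem hall
  have hl2 : w.1.length = 2 := by rw [← hlen, hcount]
  refine ⟨p.1, p.2, ?_⟩
  rw [hrep, hl2]
  rfl

lemma cyclicEquiv_wordAA (w : SignedWord) (h : w.numLetters = 1) :
    w.CyclicEquiv wordAA := by
  obtain ⟨a, s, hw⟩ := eq_pair_of_numLetters_one w h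
  have hiso : Iso w.1 [(0, s), (0, s)] := by
    refine ⟨Equiv.swap a 0, ?_⟩
    rw [hw]
    simp [Equiv.swap_apply_left]
  cases s with
  | true => exact Relation.EqvGen.rel _ _ (Or.inl hiso)
  | false =>
    have hmove : Move wordAA.1 [(0, false), (0, false)] :=
      ⟨0, true, [], [], rfl, rfl⟩
    exact Relation.EqvGen.trans _ _ _ (Relation.EqvGen.rel _ _ (Or.inl hiso))
      (Relation.EqvGen.symm _ _ (Relation.EqvGen.rel _ _ (Or.inr hmove)))

end MyAux5
section MyAux6
variable {F : Type*} [Field F]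

lemma const_one_mem : FiniteTypeLe F 1 (fun _ => (1 : F)) := by
  refine ⟨fun _ _ _ => rfl, ?_⟩
  apply vanish_of_two
  intro w S hS hcard
  obtain ⟨a, b, hab, rfl⟩ := Finset.card_eq_two.mp hcard
  rw [prolong_pair _ _ hab]
  ring

lemma numLetters_mem : FiniteTypeLe F 1 (fun w => (w.numLetters : F)) := by
  refine ⟨wordInvariant_numLetters, ?_⟩
  apply vanish_of_two
  intro w S hS hcard
  obtain ⟨a, b, hab, rfl⟩ := Finset.card_eq_two.mp hcard
  have ha : a ∈ w.letters := hS (by simp)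
  have hb : b ∈ w.letters := hS (by simp)
  have hn : 2 ≤ w.numLetters := hcard ▸ Finset.card_le_card hS
  rw [prolong_pair _ _ hab]
  have d1 : (w.delete {a}).numLetters = w.numLetters - 1 := by
    rw [numLetters_delete w {a} (by simpa using ha)]; rfl
  have d2 : (w.delete {b}).numLetters = w.numLetters - 1 := by
    rw [numLetters_delete w {b} (by simpa using hb)]; rfl
  have d3 : (w.delete {a, b}).numLetters = w.numLetters - 2 := by
    rw [numLetters_delete w {a, b} hS, hcard]
  rw [d1, d2, d3]
  rw [Nat.cast_sub (by omega), Nat.cast_sub (by omega)]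
  push_cast
  ring

lemma numLetters_wordEmpty : wordEmpty.numLetters = 0 := rfl

lemma numLetters_wordAA : wordAA.numLetters = 1 := rfl

lemma key_span (v : SignedWord → F) (hv : FiniteTypeLe F 1 v) (w : SignedWord) :
    v w = v wordEmpty + (w.numLetters : F) * (v wordAA - v wordEmpty) := by
  obtain ⟨hWI, hP⟩ := hv
  have main : ∀ (n : ℕ) (w : SignedWord), w.numLetters = n →
      v w = v wordEmpty + (w.numLetters : F) * (v wordAA - v wordEmpty) := by
    intro n
    induction n using Nat.strong_induction_on with
    | _ n ih =>
      intro w hw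
      match n, hw with
      | 0, hw =>
        rw [eq_empty_of_numLetters_zero w hw]
        simp [numLetters_wordEmpty]
      | 1, hw =>
        rw [hWI w wordAA (cyclicEquiv_wordAA w hw), hw]
        push_cast
        ring
      | (m + 2), hw =>
        have h2 : 1 < w.letters.card := by
          show 1 < w.numLetters; omega
        obtain ⟨a, ha, b, hb, hab⟩ := Finset.one_lt_card.mp h2
        have hS : ({a, b} : Finset ℕ) ⊆ w.letters := by
          intro x hx
          rcases Finset.mem_insert.mp hx with rfl | hx
          · exact ha
          · rw [Finset.mem_singleton] at hx; exact hx ▸ hb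
        have hcard : ({a, b} : Finset ℕ).card = 2 := Finset.card_pair hab
        have h0 : prolong F v w {a, b} = 0 := hP w {a, b} hS (by omega)
        rw [prolong_pair _ _ hab] at h0
        have d1 : (w.delete {a}).numLetters = m + 1 := by
          rw [numLetters_delete w {a} (by simpa using ha), hw]; simp
        have d2 : (w.delete {b}).numLetters = m + 1 := by
          rw [numLetters_delete w {b} (by simpa using hb), hw]; simp
        have d3 : (w.delete {a, b}).numLetters = m := by
          rw [numLetters_delete w {a, b} hS, hcard, hw]; omega
        have e1 := ih (m + 1) (by omega) (w.delete {a}) d1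
        have e2 := ih (m + 1) (by omega) (w.delete {b}) d2
        have e3 := ih m (by omega) (w.delete {a, b}) d3
        rw [d1] at e1; rw [d2] at e2; rw [d3] at e3
        have : v w = v (w.delete {a}) + v (w.delete {b}) - v (w.delete {a, b}) := by
          linear_combination h0
        rw [this, e1, e2, e3, hw]
        push_cast
        ring
  exact main w.numLetters w rfl

end MyAux6

/-- `dim V₁ = 2`, with basis the constant function `1` and the
number-of-letters function. -/
theorem V1_dim_eq_two (F : Type*) [Field F] [CharZero F] :
    Module.finrank F (Vn F 1) = 2 ∧
    ∃ b : Module.Basis (Fin 2) F (Vn F 1),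
      ((b 0 : SignedWord → F) = fun _ => 1) ∧
      ((b 1 : SignedWord → F) = fun w => (w.numLetters : F)) := by
  classical
  have h0 : (fun _ => (1 : F)) ∈ Vn F 1 := const_one_mem
  have h1 : (fun w : SignedWord => (w.numLetters : F)) ∈ Vn F 1 := numLetters_mem
  set v0 : Vn F 1 := ⟨fun _ => (1 : F), h0⟩ with hv0
  set v1 : Vn F 1 := ⟨fun w => (w.numLetters : F), h1⟩ with hv1
  have hli : LinearIndependent F ![v0, v1] := by
    rw [LinearIndependent.pair_iff]
    intro s t hst
    have hfun : s • (fun _ => (1 : F)) + t • (fun w : SignedWord => (w.numLetters : F)) =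
        (0 : SignedWord → F) := by
      have := congrArg (fun x : Vn F 1 => (x : SignedWord → F)) hst
      simpa [hv0, hv1] using this
    have hE := congrFun hfun wordEmpty
    have hA := congrFun hfun wordAA
    simp [numLetters_wordEmpty, numLetters_wordAA] at hE hA
    constructor
    · exact hE
    · rw [hE, zero_add] at hA; exact hA
  have hspan : ⊤ ≤ Submodule.span F (Set.range ![v0, v1]) := by
    intro x _
    have hx : (x : SignedWord → F) ∈ Vn F 1 := x.2
    have hk := key_span (F := F) (x : SignedWord → F) hx
    have hxeq : x = ((x : SignedWord → F) wordEmpty) • v0 +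
        ((x : SignedWord → F) wordAA - (x : SignedWord → F) wordEmpty) • v1 := by
      apply Subtype.ext
      funext w
      have := hk w
      simp [hv0, hv1]
      rw [this]
      ring
    rw [hxeq]
    exact Submodule.add_mem _
      (Submodule.smul_mem _ _ (Submodule.subset_span ⟨0, rfl⟩))
      (Submodule.smul_mem _ _ (Submodule.subset_span ⟨1, rfl⟩))
  let b : Module.Basis (Fin 2) F (Vn F 1) := Module.Basis.mk hli hspan
  refine ⟨?_, b, ?_, ?_⟩
  · rw [Module.finrank_eq_card_basis b, Fintype.card_fin]
  · show ((b 0 : Vn F 1) : SignedWord → F) = _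
    rw [show b 0 = v0 from by simp [b, Module.Basis.mk_apply]]
  · show ((b 1 : Vn F 1) : SignedWord → F) = _
    rw [show b 1 = v1 from by simp [b, Module.Basis.mk_apply]]
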